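/- Density of the q-deformed rational intervals: for every real q with 0 < q < 1, the closure in ℝ of the union ⋃_{x ∈ ℚ, x > 0} [ [x]♭_q , [x]♯_q ] of the closed intervals with left endpoint the left q-deformation and right endpoint the right q-deformation of x equals the closed interval [0, 1/(1−q)]. -/

import Mathlib

open Matrix Filter

/-- The q-deformed generator σ₁(q) = [[q⁻¹, −q⁻¹], [0, 1]]. -/
noncomputable def sig1 (q : ℝ) : Matrix (Fin 2) (Fin 2) ℝ := !![q⁻¹, -q⁻¹; 0, 1]

/-- The q-deformed generator σ₂(q) = [[1, 0], [1, q⁻¹]]. -/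
noncomputable def sig2 (q : ℝ) : Matrix (Fin 2) (Fin 2) ℝ := !![1, 0; 1, q⁻¹]

/-- `betaMat q a k` is the product of the first `k` alternating factors
`σ₁(q)^{-a 1} · σ₂(q)^{a 2} · σ₁(q)^{-a 3} ⋯` (indices start at 1). -/
noncomputable def betaMat (q : ℝ) (a : ℕ → ℤ) : ℕ → Matrix (Fin 2) (Fin 2) ℝ
  | 0 => 1
  | k + 1 => betaMat q a k *
      (if (k + 1) % 2 = 1 then sig1 q ^ (-(a (k + 1))) else sig2 q ^ (a (k + 1)))

/-- Möbius action of a 2×2 real matrix on a real number: z ↦ (Az + B)/(Cz + D). -/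
noncomputable def mobiusAct (M : Matrix (Fin 2) (Fin 2) ℝ) (z : ℝ) : ℝ :=
  (M 0 0 * z + M 0 1) / (M 1 0 * z + M 1 1)

/-- Möbius image of ∞ under a 2×2 real matrix: ∞ ↦ A/C. -/
noncomputable def mobiusInf (M : Matrix (Fin 2) (Fin 2) ℝ) : ℝ := M 0 0 / M 1 0

/-- `a` (on indices 1,…,2n) is an even continued form: either `a₁ ≥ 0` and `aᵢ ≥ 1` for
`2 ≤ i ≤ 2n`, or `a₁ ≤ 0` and `aᵢ ≤ −1` for `2 ≤ i ≤ 2n`. -/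
def IsEvenForm (n : ℕ) (a : ℕ → ℤ) : Prop :=
  1 ≤ n ∧ ((0 ≤ a 1 ∧ ∀ i, 2 ≤ i → i ≤ 2 * n → 1 ≤ a i)
    ∨ (a 1 ≤ 0 ∧ ∀ i, 2 ≤ i → i ≤ 2 * n → a i ≤ -1))

/-- Value of the continued fraction `a i + 1/(a (i+1) + 1/(⋯ + 1/(a last)))`. -/
def cfVal (a : ℕ → ℤ) (last i : ℕ) : ℚ :=
  if last ≤ i then (a i : ℚ)
  else (a i : ℚ) + 1 / cfVal a last (i + 1)
termination_by last - i
decreasing_by omega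

/-- `a` (on indices 1,…,2n) is the even continued fraction expansion of the rational `x`:
for `x ≠ 0` it is an even continued form of value `x`; by convention the expansion of `0`
is `(−1, 1)`. -/
def IsECFExp (n : ℕ) (a : ℕ → ℤ) (x : ℚ) : Prop :=
  (x ≠ 0 ∧ IsEvenForm n a ∧ cfVal a (2 * n) 1 = x) ∨
  (x = 0 ∧ n = 1 ∧ a 1 = -1 ∧ a 2 = 1)

/-- The right q-deformation attached to expansion data `(n, a)`:
the image of ∞ under the Möbius transformation of β(a, q). -/
noncomputable def sharpVal (q : ℝ) (n : ℕ) (a : ℕ → ℤ) : ℝ :=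
  mobiusInf (betaMat q a (2 * n))

/-- The left q-deformation attached to expansion data `(n, a)`:
the image of 1/(1−q) under the Möbius transformation of β(a, q). -/
noncomputable def flatVal (q : ℝ) (n : ℕ) (a : ℕ → ℤ) : ℝ :=
  mobiusAct (betaMat q a (2 * n)) (1 / (1 - q))


namespace QD

noncomputable def s1i (q : ℝ) : Matrix (Fin 2) (Fin 2) ℝ := !![q, 1; 0, 1]

variable {q : ℝ}

lemma sig1_det (hq : q ≠ 0) : IsUnit (sig1 q).det := by
  simp [sig1, Matrix.det_fin_two_of]
  exact hq

lemma sig2_det (hq : q ≠ 0) : IsUnit (sig2 q).det := by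
  simp [sig2, Matrix.det_fin_two_of]
  exact hq

lemma s1i_mul_sig1 (hq : q ≠ 0) : s1i q * sig1 q = 1 := by
  ext i j
  fin_cases i <;> fin_cases j <;>
    simp [s1i, sig1, Matrix.mul_apply, Fin.sum_univ_two, mul_inv_cancel₀ hq]

lemma sig1_zpow_negsucc (hq : q ≠ 0) (x : ℤ) :
    sig1 q ^ (-(x + 1)) = s1i q * sig1 q ^ (-x) := by
  have h1 : (sig1 q)⁻¹ = s1i q := Matrix.inv_eq_left_inv (s1i_mul_sig1 hq)
  have h2 : -(x + 1) = (-1) + (-x) := by ring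
  rw [h2, Matrix.zpow_add (sig1_det hq), Matrix.zpow_neg_one, h1]

lemma sig2_zpow_succ (hq : q ≠ 0) (x : ℤ) :
    sig2 q ^ (x + 1) = sig2 q * sig2 q ^ x := by
  have h2 : x + 1 = 1 + x := by ring
  rw [h2, Matrix.zpow_one_add (sig2_det hq)]

variable {a b : ℕ → ℤ}

lemma betaMat_succ (k : ℕ) : betaMat q a (k + 1) = betaMat q a k *
    (if (k + 1) % 2 = 1 then sig1 q ^ (-(a (k + 1))) else sig2 q ^ (a (k + 1))) := rfl

lemma betaMat_one : betaMat q a 1 = sig1 q ^ (-(a 1)) := by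
  rw [betaMat_succ]; norm_num [betaMat]

lemma betaMat_two : betaMat q a 2 = sig1 q ^ (-(a 1)) * sig2 q ^ (a 2) := by
  rw [betaMat_succ, betaMat_one]; norm_num

lemma betaMat_congr : ∀ m, (∀ i, 1 ≤ i → i ≤ m → a i = b i) →
    betaMat q a m = betaMat q b m
  | 0, _ => rfl
  | m + 1, h => by
    rw [betaMat_succ, betaMat_succ, betaMat_congr m (fun i h1 h2 => h i h1 (by omega)),
      h (m + 1) (by omega) le_rfl]

lemma betaMat_shift (hb : ∀ i, 1 ≤ i → b (i + 2) = a i) :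
    ∀ m, betaMat q b (m + 2) = betaMat q b 2 * betaMat q a m
  | 0 => by simp [betaMat]
  | m + 1 => by
    have e1 : m + 1 + 2 = (m + 2) + 1 := by omega
    have e2 : (m + 2 + 1) % 2 = (m + 1) % 2 := by omega
    have e3 : m + 2 + 1 = (m + 1) + 2 := by omega
    rw [e1, betaMat_succ, betaMat_shift hb m, mul_assoc]
    congr 1
    rw [betaMat_succ]
    congr 1
    rw [e2, e3, hb (m + 1) (by omega)]

lemma betaMat_updL (hq : q ≠ 0) :
    ∀ m, 1 ≤ m → betaMat q (Function.update a 1 (a 1 + 1)) m = s1i q * betaMat q a m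
  | 1, _ => by
    rw [betaMat_one, betaMat_one, Function.update_self, sig1_zpow_negsucc hq]
  | m + 2, _ => by
    have hu : Function.update a 1 (a 1 + 1) (m + 2) = a (m + 2) :=
      Function.update_of_ne (by omega) _ _
    rw [betaMat_succ (q := q) (a := Function.update a 1 (a 1 + 1)) (m + 1),
      betaMat_succ (q := q) (a := a) (m + 1), betaMat_updL hq (m + 1) (by omega), mul_assoc, hu]

lemma betaMat_updR (hq : q ≠ 0) (h1 : a 1 = 0) (m : ℕ) (hm : 2 ≤ m) :
    betaMat q (Function.update a 2 (a 2 + 1)) m = sig2 q * betaMat q a m := by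
  obtain ⟨m', rfl⟩ : ∃ m', m = m' + 2 := ⟨m - 2, by omega⟩
  have hs1 : ∀ i, 1 ≤ i → (Function.update a 2 (a 2 + 1)) (i + 2) = a (i + 2) :=
    fun i hi => Function.update_of_ne (by omega) _ _
  have hs2 : ∀ i, 1 ≤ i → a (i + 2) = a (i + 2) := fun _ _ => rfl
  rw [betaMat_shift (a := fun i => a (i + 2)) hs1, betaMat_shift (a := fun i => a (i + 2)) hs2,
    betaMat_two, betaMat_two, Function.update_of_ne (by omega), Function.update_self, h1]
  simp only [neg_zero, zpow_zero, one_mul]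
  simp [sig2_zpow_succ hq, mul_assoc]

/-- prepend `σ₂` by extending the sequence by two new entries (0, 1). -/
def rext (a : ℕ → ℤ) : ℕ → ℤ := fun i => if i = 1 then 0 else if i = 2 then 1 else a (i - 2)

lemma betaMat_rext (m : ℕ) : betaMat q (rext a) (m + 2) = sig2 q * betaMat q a m := by
  have hs : ∀ i, 1 ≤ i → (rext a) (i + 2) = a i := by
    intro i hi; simp only [rext]
    rw [if_neg (by omega), if_neg (by omega)]
    congr 1
  rw [betaMat_shift hs, betaMat_two]
  simp only [rext, if_pos rfl, if_neg (by norm_num : (2:ℕ) ≠ 1)]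
  norm_num

/-- The matrix invariant: nonnegative entries, positive lower-left entry, and
column conditions ensuring the Möbius images of `[0, ∞]` stay in `[0, 1/(1-q)]`. -/
def Inv (q : ℝ) (M : Matrix (Fin 2) (Fin 2) ℝ) : Prop :=
  0 ≤ M 0 0 ∧ 0 ≤ M 0 1 ∧ 0 < M 1 0 ∧ 0 ≤ M 1 1 ∧
    M 0 0 * (1 - q) ≤ M 1 0 ∧ M 0 1 * (1 - q) ≤ M 1 1

variable {M : Matrix (Fin 2) (Fin 2) ℝ}

lemma s1i_mul_ent :
    (s1i q * M) 0 0 = q * M 0 0 + M 1 0 ∧ (s1i q * M) 0 1 = q * M 0 1 + M 1 1 ∧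
    (s1i q * M) 1 0 = M 1 0 ∧ (s1i q * M) 1 1 = M 1 1 := by
  refine ⟨?_, ?_, ?_, ?_⟩ <;> simp [s1i, Matrix.mul_apply, Fin.sum_univ_two]

lemma sig2_mul_ent :
    (sig2 q * M) 0 0 = M 0 0 ∧ (sig2 q * M) 0 1 = M 0 1 ∧
    (sig2 q * M) 1 0 = M 0 0 + q⁻¹ * M 1 0 ∧ (sig2 q * M) 1 1 = M 0 1 + q⁻¹ * M 1 1 := by
  refine ⟨?_, ?_, ?_, ?_⟩ <;> simp [sig2, Matrix.mul_apply, Fin.sum_univ_two]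

lemma inv_s1i_mul (hq0 : 0 < q) (hq1 : q < 1) (h : Inv q M) : Inv q (s1i q * M) := by
  obtain ⟨e1, e2, e3, e4⟩ := s1i_mul_ent (q := q) (M := M)
  obtain ⟨h1, h2, h3, h4, h5, h6⟩ := h
  rw [Inv, e1, e2, e3, e4]
  refine ⟨by nlinarith, by nlinarith, h3, h4, by nlinarith, by nlinarith⟩

lemma inv_sig2_mul (hq0 : 0 < q) (hq1 : q < 1) (h : Inv q M) : Inv q (sig2 q * M) := by
  obtain ⟨e1, e2, e3, e4⟩ := sig2_mul_ent (q := q) (M := M)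
  obtain ⟨h1, h2, h3, h4, h5, h6⟩ := h
  have hqi : 0 < q⁻¹ := inv_pos.2 hq0
  rw [Inv, e1, e2, e3, e4]
  refine ⟨h1, h2, by nlinarith, by nlinarith, by nlinarith, by nlinarith⟩

lemma inv_sig2_base (hq0 : 0 < q) (hq1 : q < 1) : Inv q (sig2 q) := by
  have hqi : 0 < q⁻¹ := inv_pos.2 hq0
  refine ⟨by norm_num [sig2], by norm_num [sig2], by norm_num [sig2], ?_, ?_, ?_⟩ <;>
    simp [sig2] <;> nlinarith

/-- `Good n a`: the nonnegative-branch even-form condition. -/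
def Good (n : ℕ) (a : ℕ → ℤ) : Prop :=
  1 ≤ n ∧ 0 ≤ a 1 ∧ ∀ i, 2 ≤ i → i ≤ 2 * n → 1 ≤ a i

lemma inv_beta (hq0 : 0 < q) (hq1 : q < 1) :
    ∀ ν μ (n : ℕ) (a : ℕ → ℤ), n ≤ ν → (a 1).toNat + (a 2).toNat ≤ μ → Good n a →
      Inv q (betaMat q a (2 * n)) := by
  have hq : q ≠ 0 := ne_of_gt hq0
  intro ν
  induction ν with
  | zero => intro μ n a hn _ hg; exact absurd hg.1 (by omega)
  | succ ν ihν =>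
    intro μ
    induction μ with
    | zero =>
      intro n a hn hμ hg
      exact absurd (hg.2.2 2 le_rfl (by have := hg.1; omega)) (by omega)
    | succ μ ihμ =>
      intro n a hn hμ hg
      obtain ⟨hn1, ha1, hai⟩ := hg
      by_cases h1 : 1 ≤ a 1
      · set a' := Function.update a 1 (a 1 - 1) with ha'
        have h1' : a' 1 = a 1 - 1 := Function.update_self _ _ _
        have h2' : a' 2 = a 2 := Function.update_of_ne (by omega) _ _
        have e : Function.update a' 1 (a' 1 + 1) = a := by
          rw [ha', Function.update_self, Function.update_idem, sub_add_cancel,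
            Function.update_eq_self]
        have hInv : Inv q (betaMat q a' (2 * n)) := by
          refine ihμ n a' hn (by omega) ⟨hn1, by omega, fun i hi hi' => ?_⟩
          rw [ha', Function.update_of_ne (by omega)]
          exact hai i hi hi'
        have key := betaMat_updL (a := a') hq (2 * n) (by omega)
        rw [e] at key
        rw [key]
        exact inv_s1i_mul hq0 hq1 hInv
      · have h1z : a 1 = 0 := by omega
        by_cases h2 : 2 ≤ a 2
        · set a' := Function.update a 2 (a 2 - 1) with ha'
          have h1' : a' 1 = a 1 := Function.update_of_ne (by omega) _ _
          have h2' : a' 2 = a 2 - 1 := Function.update_self _ _ _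
          have e : Function.update a' 2 (a' 2 + 1) = a := by
            rw [ha', Function.update_self, Function.update_idem, sub_add_cancel,
              Function.update_eq_self]
          have hInv : Inv q (betaMat q a' (2 * n)) := by
            refine ihμ n a' hn (by omega) ⟨hn1, by omega, fun i hi hi' => ?_⟩
            rcases eq_or_ne i 2 with rfl | hne
            · rw [h2']; omega
            · rw [ha', Function.update_of_ne hne]; exact hai i hi hi'
          have key := betaMat_updR (a := a') hq (by omega) (2 * n) (by omega)
          rw [e] at key
          rw [key]
          exact inv_sig2_mul hq0 hq1 hInv
        · have h2z : a 2 = 1 := by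
            have := hai 2 le_rfl (by omega); omega
          have hbase : betaMat q a 2 = sig2 q := by
            rw [betaMat_two, h1z, h2z]
            simp
          rcases eq_or_lt_of_le hn1 with h | hgt
          · rw [← h]
            norm_num [hbase]
            exact inv_sig2_base hq0 hq1
          · have e2n : 2 * n = 2 * (n - 1) + 2 := by omega
            have key := betaMat_shift (q := q) (b := a) (a := fun i => a (i + 2))
              (fun i _ => rfl) (2 * (n - 1))
            have hInv : Inv q (betaMat q (fun i => a (i + 2)) (2 * (n - 1))) := by
              refine ihν (((fun i => a (i + 2)) 1).toNat + ((fun i => a (i + 2)) 2).toNat)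
                (n - 1) (fun i => a (i + 2)) (by omega) le_rfl
                ⟨by omega, ?_, fun i hi hi' => ?_⟩
              · show 0 ≤ a 3
                have := hai 3 (by omega) (by omega); omega
              · show 1 ≤ a (i + 2)
                exact hai (i + 2) (by omega) (by omega)
            rw [e2n, key, hbase]
            exact inv_sig2_mul hq0 hq1 hInv
      
lemma denom_pos (hq1 : q < 1) (hInv : Inv q M) {z : ℝ} (hz : 0 < z) :
    0 < M 1 0 * z + M 1 1 := by
  obtain ⟨h1, h2, h3, h4, h5, h6⟩ := hInv
  nlinarith

lemma flat_nonneg (hq1 : q < 1) (hInv : Inv q M) {z : ℝ} (hz : 0 < z) :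
    0 ≤ mobiusAct M z := by
  obtain ⟨h1, h2, h3, h4, h5, h6⟩ := hInv
  have hd : 0 < M 1 0 * z + M 1 1 := by nlinarith
  exact div_nonneg (by nlinarith) hd.le

lemma sharp_nonneg (hInv : Inv q M) : 0 ≤ mobiusInf M :=
  div_nonneg hInv.1 hInv.2.2.1.le

lemma sharp_le_u (hq1 : q < 1) (hInv : Inv q M) : mobiusInf M ≤ 1 / (1 - q) := by
  obtain ⟨h1, h2, h3, h4, h5, h6⟩ := hInv
  rw [mobiusInf, div_le_div_iff₀ h3 (by linarith)]
  nlinarith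

lemma flat_le_u (hq1 : q < 1) (hInv : Inv q M) {z : ℝ} (hz : 0 < z)
    (hzu : z ≤ 1 / (1 - q)) : mobiusAct M z ≤ 1 / (1 - q) := by
  obtain ⟨h1, h2, h3, h4, h5, h6⟩ := hInv
  have hd : 0 < M 1 0 * z + M 1 1 := by nlinarith
  rw [mobiusAct, div_le_div_iff₀ hd (by linarith)]
  nlinarith

lemma mobiusAct_s1i_mul (hInv : Inv q M) {z : ℝ} (hz : 0 < z) (hq1 : q < 1) :
    mobiusAct (s1i q * M) z = q * mobiusAct M z + 1 := by
  obtain ⟨e1, e2, e3, e4⟩ := s1i_mul_ent (q := q) (M := M)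
  have hd := denom_pos hq1 hInv hz
  rw [mobiusAct, mobiusAct, e1, e2, e3, e4]
  field_simp
  ring

lemma mobiusInf_s1i_mul (hInv : Inv q M) :
    mobiusInf (s1i q * M) = q * mobiusInf M + 1 := by
  obtain ⟨e1, e2, e3, e4⟩ := s1i_mul_ent (q := q) (M := M)
  have hC := hInv.2.2.1
  rw [mobiusInf, mobiusInf, e1, e3]
  field_simp

lemma mobiusAct_sig2_mul (hq0 : 0 < q) (hq1 : q < 1) (hInv : Inv q M) {z : ℝ}
    (hz : 0 < z) : mobiusAct (sig2 q * M) z = mobiusAct M z / (mobiusAct M z + q⁻¹) := by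
  obtain ⟨e1, e2, e3, e4⟩ := sig2_mul_ent (q := q) (M := M)
  have hd := denom_pos hq1 hInv hz
  have hn : 0 ≤ M 0 0 * z + M 0 1 := by
    obtain ⟨h1, h2, h3, h4, h5, h6⟩ := hInv; nlinarith
  have hw : 0 ≤ mobiusAct M z := flat_nonneg hq1 hInv hz
  have hd2 : 0 < mobiusAct M z + q⁻¹ := by positivity
  rw [mobiusAct, e1, e2, e3, e4]
  rw [show (M 0 0 + q⁻¹ * M 1 0) * z + (M 0 1 + q⁻¹ * M 1 1)
      = (M 0 0 * z + M 0 1) + q⁻¹ * (M 1 0 * z + M 1 1) by ring]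
  rw [mobiusAct] at hd2 ⊢
  rw [div_add' _ _ _ hd.ne', div_div_div_cancel_right₀ hd.ne']

lemma mobiusInf_sig2_mul (hq0 : 0 < q) (hq1 : q < 1) (hInv : Inv q M) :
    mobiusInf (sig2 q * M) = mobiusInf M / (mobiusInf M + q⁻¹) := by
  obtain ⟨e1, e2, e3, e4⟩ := sig2_mul_ent (q := q) (M := M)
  obtain ⟨h1, h2, h3, h4, h5, h6⟩ := hInv
  have hw : 0 ≤ mobiusInf M := div_nonneg h1 h3.le
  have hd2 : 0 < mobiusInf M + q⁻¹ := by positivity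
  rw [mobiusInf, e1, e3, mobiusInf] at *
  field_simp

/-- Monotonicity of w ↦ w/(w + q⁻¹) on nonnegative reals. -/
lemma phiR_mono (hq0 : 0 < q) {w1 w2 : ℝ} (h0 : 0 ≤ w1) (h12 : w1 ≤ w2) :
    w1 / (w1 + q⁻¹) ≤ w2 / (w2 + q⁻¹) := by
  have hqi : 0 < q⁻¹ := inv_pos.2 hq0
  rw [div_le_div_iff₀ (by linarith) (by linarith)]
  nlinarith

/-- Lipschitz bound for w ↦ w/(w + q⁻¹) on nonnegative reals. -/
lemma phiR_lip (hq0 : 0 < q) {w1 w2 : ℝ} (h1 : 0 ≤ w1) (h2 : 0 ≤ w2) :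
    |w1 / (w1 + q⁻¹) - w2 / (w2 + q⁻¹)| ≤ q * |w1 - w2| := by
  have hqi : 0 < q⁻¹ := inv_pos.2 hq0
  have e : w1 / (w1 + q⁻¹) - w2 / (w2 + q⁻¹)
      = q⁻¹ * (w1 - w2) / ((w1 + q⁻¹) * (w2 + q⁻¹)) := by
    field_simp
    ring
  rw [e, abs_div, abs_mul, abs_of_pos hqi,
    abs_of_pos (by positivity : (0:ℝ) < (w1 + q⁻¹) * (w2 + q⁻¹))]
  rw [div_le_iff₀ (by positivity)]
  have hb : q⁻¹ * q⁻¹ ≤ (w1 + q⁻¹) * (w2 + q⁻¹) := by nlinarith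
  have habs : 0 ≤ |w1 - w2| := abs_nonneg _
  calc q⁻¹ * |w1 - w2| = (q * |w1 - w2|) * (q⁻¹ * q⁻¹) := by
        field_simp
    _ ≤ (q * |w1 - w2|) * ((w1 + q⁻¹) * (w2 + q⁻¹)) := by
        apply mul_le_mul_of_nonneg_left hb (by positivity)

/-- The base expansion data, corresponding to the rational 1 = [0; 1]. -/
def abase : ℕ → ℤ := fun i => if i = 2 then 1 else 0

lemma abase_good : Good 1 abase := by
  refine ⟨le_rfl, by norm_num [abase], fun i h2 h2' => ?_⟩
  interval_cases i <;> norm_num [abase]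

lemma betaMat_abase : betaMat q abase 2 = sig2 q := by
  rw [betaMat_two]
  norm_num [abase]

lemma flat_base (hq0 : 0 < q) (hq1 : q < 1) : flatVal q 1 abase = q := by
  have h1 : (1:ℝ) - q ≠ 0 := by intro h; nlinarith
  have hqne : q ≠ 0 := ne_of_gt hq0
  rw [flatVal, show 2 * 1 = 2 from rfl, betaMat_abase, mobiusAct]
  rw [show sig2 q 0 0 = 1 from rfl, show sig2 q 0 1 = 0 from rfl,
    show sig2 q 1 0 = 1 from rfl, show sig2 q 1 1 = q⁻¹ from rfl]
  have h1q : (0:ℝ) < 1 - q := by nlinarith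
  have hpos : (0:ℝ) < 1 * (1 / (1 - q)) + q⁻¹ := by positivity
  rw [div_eq_iff (ne_of_gt hpos)]
  field_simp
  ring

lemma sharp_base (hq0 : 0 < q) : sharpVal q 1 abase = 1 := by
  rw [sharpVal, show 2 * 1 = 2 from rfl, betaMat_abase, mobiusInf]
  rw [show sig2 q 0 0 = 1 from rfl, show sig2 q 1 0 = 1 from rfl]
  norm_num

lemma dense_aux (hq0 : 0 < q) (hq1 : q < 1) :
    ∀ k (t : ℝ), 0 ≤ t → t ≤ 1 / (1 - q) →
    ∃ n a, Good n a ∧ ∃ s : ℝ, flatVal q n a ≤ s ∧ s ≤ sharpVal q n a ∧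
      |t - s| ≤ q ^ k * (1 / (1 - q)) := by
  have h1q : (0:ℝ) < 1 - q := by linarith
  have hu : (0:ℝ) < 1 / (1 - q) := by positivity
  have hqu : q ≤ 1 / (1 - q) := by
    rw [le_div_iff₀ h1q]; nlinarith
  have hq : q ≠ 0 := ne_of_gt hq0
  intro k
  induction k with
  | zero =>
    intro t ht0 htu
    refine ⟨1, abase, abase_good, q, le_of_eq (flat_base hq0 hq1), ?_, ?_⟩
    · rw [sharp_base hq0]; linarith
    · rw [pow_zero, one_mul, abs_le]
      constructor <;> nlinarith
  | succ k ih =>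
    intro t ht0 htu
    by_cases htq : t < q
    · -- case B : pull back through σ₂
      have h1t : (0:ℝ) < 1 - t := by nlinarith
      have hden : (0:ℝ) < q * (1 - t) := by positivity
      set t' := t / (q * (1 - t)) with ht'
      have ht'0 : 0 ≤ t' := div_nonneg ht0 hden.le
      have ht'u : t' ≤ 1 / (1 - q) := by
        rw [ht', div_le_div_iff₀ hden h1q]; nlinarith
      obtain ⟨n, a, hg, s', hfs, hss, hd⟩ := ih t' ht'0 ht'u
      have hInv : Inv q (betaMat q a (2 * n)) :=
        inv_beta hq0 hq1 n ((a 1).toNat + (a 2).toNat) n a le_rfl le_rfl hg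
      obtain ⟨n₂, a₂, hg₂, hkey⟩ : ∃ n₂ a₂, Good n₂ a₂ ∧
          betaMat q a₂ (2 * n₂) = sig2 q * betaMat q a (2 * n) := by
        by_cases ha1 : a 1 = 0
        · refine ⟨n, Function.update a 2 (a 2 + 1), ⟨hg.1, ?_, fun i hi hi' => ?_⟩,
            betaMat_updR hq ha1 (2 * n) (by have := hg.1; omega)⟩
          · rw [Function.update_of_ne (by omega)]; exact hg.2.1
          · rcases eq_or_ne i 2 with rfl | hne
            · rw [Function.update_self]
              have := hg.2.2 2 le_rfl (by have := hg.1; omega); omega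
            · rw [Function.update_of_ne hne]; exact hg.2.2 i hi hi'
        · have ha1' : 1 ≤ a 1 := by have := hg.2.1; omega
          refine ⟨n + 1, rext a, ⟨by omega, by norm_num [rext], fun i hi hi' => ?_⟩, ?_⟩
          · rcases eq_or_ne i 2 with rfl | hne
            · norm_num [rext]
            · rw [show rext a i = a (i - 2) by
                simp only [rext]; rw [if_neg (by omega), if_neg hne]]
              rcases eq_or_ne (i - 2) 1 with he | hne2
              · rw [he]; exact ha1'
              · exact hg.2.2 (i - 2) (by omega) (by omega)
          · rw [show 2 * (n + 1) = 2 * n + 2 by ring, betaMat_rext]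
      have hflat2 : flatVal q n₂ a₂ = flatVal q n a / (flatVal q n a + q⁻¹) := by
        rw [flatVal, hkey, mobiusAct_sig2_mul hq0 hq1 hInv hu]; rfl
      have hsharp2 : sharpVal q n₂ a₂ = sharpVal q n a / (sharpVal q n a + q⁻¹) := by
        rw [sharpVal, hkey, mobiusInf_sig2_mul hq0 hq1 hInv]; rfl
      have hf0 : 0 ≤ flatVal q n a := flat_nonneg hq1 hInv hu
      have hs'0 : 0 ≤ s' := le_trans hf0 hfs
      refine ⟨n₂, a₂, hg₂, s' / (s' + q⁻¹), ?_, ?_, ?_⟩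
      · rw [hflat2]; exact phiR_mono hq0 hf0 hfs
      · rw [hsharp2]; exact phiR_mono hq0 hs'0 hss
      · have hts : t = t' / (t' + q⁻¹) := by
          have e : t' + q⁻¹ = 1 / (q * (1 - t)) := by
            rw [ht']; field_simp; ring
          rw [e, div_div_eq_mul_div, div_one, ht']
          field_simp
        rw [hts]
        calc |t' / (t' + q⁻¹) - s' / (s' + q⁻¹)| ≤ q * |t' - s'| :=
              phiR_lip hq0 ht'0 hs'0
          _ ≤ q * (q ^ k * (1 / (1 - q))) := by
              exact mul_le_mul_of_nonneg_left hd hq0.le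
          _ = q ^ (k + 1) * (1 / (1 - q)) := by ring
    · by_cases ht1 : t ≤ 1
      · -- case A : t ∈ [q, 1]
        refine ⟨1, abase, abase_good, t, ?_, ?_, ?_⟩
        · rw [flat_base hq0 hq1]; linarith
        · rw [sharp_base hq0]; exact ht1
        · rw [sub_self, abs_zero]; positivity
      · -- case C : pull back through σ₁⁻¹
        have ht1' : (1:ℝ) < t := by linarith
        set t' := (t - 1) / q with ht'
        have ht'0 : 0 ≤ t' := div_nonneg (by linarith) hq0.le
        have ht'u : t' ≤ 1 / (1 - q) := by
          rw [ht', div_le_div_iff₀ hq0 h1q]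
          rw [le_div_iff₀ h1q] at htu
          nlinarith
        obtain ⟨n, a, hg, s', hfs, hss, hd⟩ := ih t' ht'0 ht'u
        have hInv : Inv q (betaMat q a (2 * n)) :=
          inv_beta hq0 hq1 n ((a 1).toNat + (a 2).toNat) n a le_rfl le_rfl hg
        have hkey : betaMat q (Function.update a 1 (a 1 + 1)) (2 * n)
            = s1i q * betaMat q a (2 * n) :=
          betaMat_updL hq (2 * n) (by have := hg.1; omega)
        have hg₂ : Good n (Function.update a 1 (a 1 + 1)) := by
          refine ⟨hg.1, ?_, fun i hi hi' => ?_⟩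
          · rw [Function.update_self]; have := hg.2.1; omega
          · rw [Function.update_of_ne (by omega)]; exact hg.2.2 i hi hi'
        have hflat2 : flatVal q n (Function.update a 1 (a 1 + 1))
            = q * flatVal q n a + 1 := by
          rw [flatVal, hkey, mobiusAct_s1i_mul hInv hu hq1]; rfl
        have hsharp2 : sharpVal q n (Function.update a 1 (a 1 + 1))
            = q * sharpVal q n a + 1 := by
          rw [sharpVal, hkey, mobiusInf_s1i_mul hInv]; rfl
        refine ⟨n, Function.update a 1 (a 1 + 1), hg₂, q * s' + 1, ?_, ?_, ?_⟩
        · rw [hflat2]; nlinarith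
        · rw [hsharp2]; nlinarith
        · have hts : t = q * t' + 1 := by
            rw [ht']; field_simp
            ring
          rw [hts, show q * t' + 1 - (q * s' + 1) = q * (t' - s') by ring,
            abs_mul, abs_of_pos hq0]
          calc q * |t' - s'| ≤ q * (q ^ k * (1 / (1 - q))) :=
                mul_le_mul_of_nonneg_left hd hq0.le
            _ = q ^ (k + 1) * (1 / (1 - q)) := by ring

lemma cf_ge_one : ∀ k (a : ℕ → ℤ) (last : ℕ), (∀ j, 2 ≤ j → j ≤ last → 1 ≤ a j) →
    ∀ i, 2 ≤ i → i ≤ last → last - i ≤ k → (1:ℚ) ≤ cfVal a last i := by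
  intro k
  induction k with
  | zero =>
    intro a last h i h2 hil hk
    have : last = i := by omega
    rw [cfVal, if_pos (by omega)]
    exact_mod_cast h i h2 hil
  | succ k ihk =>
    intro a last h i h2 hil hk
    by_cases hle : last ≤ i
    · rw [cfVal, if_pos hle]
      exact_mod_cast h i h2 hil
    · rw [cfVal, if_neg hle]
      have ht : (1:ℚ) ≤ cfVal a last (i + 1) :=
        ihk a last h (i + 1) (by omega) (by omega) (by omega)
      have h1t : 0 < 1 / cfVal a last (i + 1) := by positivity
      have hai : (1:ℚ) ≤ (a i : ℚ) := by exact_mod_cast h i h2 hil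
      linarith

lemma cf_pos {n : ℕ} {a : ℕ → ℤ} (hg : Good n a) : 0 < cfVal a (2 * n) 1 := by
  obtain ⟨hn1, h1, h2⟩ := hg
  rw [cfVal, if_neg (by omega)]
  have ht : (1:ℚ) ≤ cfVal a (2 * n) 2 :=
    cf_ge_one (2 * n) a (2 * n) h2 2 le_rfl (by omega) (by omega)
  have h1t : 0 < 1 / cfVal a (2 * n) 2 := by positivity
  have hai : (0:ℚ) ≤ (a 1 : ℚ) := by exact_mod_cast h1
  linarith

lemma cf_lt_zero_aux : ∀ k (a : ℕ → ℤ) (last : ℕ), (∀ j, 2 ≤ j → j ≤ last → a j ≤ -1) →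
    ∀ i, 2 ≤ i → i ≤ last → last - i ≤ k → cfVal a last i < 0 := by
  intro k
  induction k with
  | zero =>
    intro a last h i h2 hil hk
    rw [cfVal, if_pos (by omega)]
    have : (a i : ℚ) ≤ -1 := by exact_mod_cast h i h2 hil
    linarith
  | succ k ihk =>
    intro a last h i h2 hil hk
    by_cases hle : last ≤ i
    · rw [cfVal, if_pos hle]
      have : (a i : ℚ) ≤ -1 := by exact_mod_cast h i h2 hil
      linarith
    · rw [cfVal, if_neg hle]
      have ht : cfVal a last (i + 1) < 0 :=
        ihk a last h (i + 1) (by omega) (by omega) (by omega)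
      have h1t : 1 / cfVal a last (i + 1) < 0 := by
        exact div_neg_of_pos_of_neg one_pos ht
      have hai : (a i : ℚ) ≤ -1 := by exact_mod_cast h i h2 hil
      linarith

lemma cf_neg {n : ℕ} {a : ℕ → ℤ} (hn1 : 1 ≤ n) (h1 : a 1 ≤ 0)
    (h2 : ∀ i, 2 ≤ i → i ≤ 2 * n → a i ≤ -1) : cfVal a (2 * n) 1 < 0 := by
  rw [cfVal, if_neg (by omega)]
  have ht : cfVal a (2 * n) 2 < 0 :=
    cf_lt_zero_aux (2 * n) a (2 * n) h2 2 le_rfl (by omega) (by omega)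
  have h1t : 1 / cfVal a (2 * n) 2 < 0 := div_neg_of_pos_of_neg one_pos ht
  have hai : (a 1 : ℚ) ≤ 0 := by exact_mod_cast h1
  linarith

end QD

theorem qdeform_intervals_dense (q : ℝ) (hq0 : 0 < q) (hq1 : q < 1) :
    closure (⋃ (x : ℚ) (_ : 0 < x) (n : ℕ) (a : ℕ → ℤ) (_ : IsECFExp n a x),
        Set.Icc (flatVal q n a) (sharpVal q n a)) = Set.Icc 0 (1 / (1 - q)) := by
  have h1q : (0:ℝ) < 1 - q := by linarith
  have hu : (0:ℝ) < 1 / (1 - q) := by positivity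
  apply subset_antisymm
  · apply closure_minimal _ isClosed_Icc
    intro z hz
    simp only [Set.mem_iUnion] at hz
    obtain ⟨x, hx, n, a, hexp, hz1, hz2⟩ := hz
    rcases hexp with ⟨hxne, ⟨hn1, hform⟩, hcf⟩ | ⟨hx0, _⟩
    · rcases hform with ⟨h1, h2⟩ | ⟨h1, h2⟩
      · have hInv : QD.Inv q (betaMat q a (2 * n)) :=
          QD.inv_beta hq0 hq1 n ((a 1).toNat + (a 2).toNat) n a le_rfl le_rfl ⟨hn1, h1, h2⟩
        constructor
        · exact le_trans (QD.flat_nonneg hq1 hInv hu) hz1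
        · exact le_trans hz2 (QD.sharp_le_u hq1 hInv)
      · exfalso
        have := QD.cf_neg hn1 h1 h2
        rw [hcf] at this
        exact absurd hx (by linarith)
    · exact absurd hx (by rw [hx0]; norm_num)
  · intro t ht
    obtain ⟨ht0, htu⟩ := ht
    rw [Metric.mem_closure_iff]
    intro ε hε
    obtain ⟨k, hk⟩ : ∃ k : ℕ, q ^ k < ε / (1 / (1 - q)) :=
      exists_pow_lt_of_lt_one (by positivity) hq1
    have hk' : q ^ k * (1 / (1 - q)) < ε := by
      rw [← lt_div_iff₀ hu]
      exact hk
    obtain ⟨n, a, hg, s, hfs, hss, habs⟩ := QD.dense_aux hq0 hq1 k t ht0 htu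
    refine ⟨s, ?_, ?_⟩
    · simp only [Set.mem_iUnion]
      refine ⟨cfVal a (2 * n) 1, QD.cf_pos hg, n, a, ?_, hfs, hss⟩
      exact Or.inl ⟨ne_of_gt (QD.cf_pos hg), ⟨hg.1, Or.inl ⟨hg.2.1, hg.2.2⟩⟩, rfl⟩
    · rw [Real.dist_eq]
      exact lt_of_le_of_lt habs hk'
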